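/- Suppose g : [0,∞) → ℝ is C², g(0) = 0, g'(0) = 1, and g'' + K g ≥ 0 where K(t) ≤ 1/(4(1+t)²) on (0,∞). Then g > 0 on (0,∞). (Sturm comparison with w(t) = √(1+t) log(1+t).) -/

import Mathlib

open Set

noncomputable def wfun (t : ℝ) : ℝ := Real.sqrt (1+t) * Real.log (1+t)
noncomputable def wfun' (t : ℝ) : ℝ :=
  Real.log (1+t) / (2 * Real.sqrt (1+t)) + Real.sqrt (1+t) / (1+t)

lemma hasDerivAt_wfun {t : ℝ} (ht : -1 < t) : HasDerivAt wfun (wfun' t) t := by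
  have h0 : (0:ℝ) < 1 + t := by linarith
  have hs : 0 < Real.sqrt (1+t) := Real.sqrt_pos.mpr h0
  have hid : HasDerivAt (fun t : ℝ => 1 + t) 1 t := by
    simpa using (hasDerivAt_id t).const_add 1
  have h1 : HasDerivAt (fun t : ℝ => Real.sqrt (1+t)) (1/(2*Real.sqrt (1+t)) * 1) t :=
    (Real.hasDerivAt_sqrt h0.ne').comp t hid
  have h2 : HasDerivAt (fun t : ℝ => Real.log (1+t)) ((1+t)⁻¹ * 1) t :=
    (Real.hasDerivAt_log h0.ne').comp t hid
  have := h1.mul h2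
  refine this.congr_deriv (Eq.symm ?_)
  have hsq : Real.sqrt (1+t) ^ 2 = 1 + t := Real.sq_sqrt h0.le
  unfold wfun'
  field_simp

lemma hasDerivAt_wfun' {t : ℝ} (ht : -1 < t) :
    HasDerivAt wfun' (-(wfun t)/(4*(1+t)^2)) t := by
  have h0 : (0:ℝ) < 1 + t := by linarith
  have hs : 0 < Real.sqrt (1+t) := Real.sqrt_pos.mpr h0
  have hid : HasDerivAt (fun t : ℝ => 1 + t) 1 t := by
    simpa using (hasDerivAt_id t).const_add 1
  have h1 : HasDerivAt (fun t : ℝ => Real.sqrt (1+t)) (1/(2*Real.sqrt (1+t)) * 1) t :=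
    (Real.hasDerivAt_sqrt h0.ne').comp t hid
  have h2 : HasDerivAt (fun t : ℝ => Real.log (1+t)) ((1+t)⁻¹ * 1) t :=
    (Real.hasDerivAt_log h0.ne').comp t hid
  have hA : HasDerivAt (fun t : ℝ => Real.log (1+t) / (2 * Real.sqrt (1+t)))
      (((1+t)⁻¹ * 1 * (2 * Real.sqrt (1+t)) - Real.log (1+t) * (2 * (1/(2*Real.sqrt (1+t)) * 1))) / (2 * Real.sqrt (1+t))^2) t :=
    h2.div (h1.const_mul 2) (by positivity)
  have hB : HasDerivAt (fun t : ℝ => Real.sqrt (1+t) / (1+t))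
      ((1/(2*Real.sqrt (1+t)) * 1 * (1+t) - Real.sqrt (1+t) * 1) / (1+t)^2) t :=
    h1.div hid h0.ne'
  have := hA.add hB
  refine this.congr_deriv (Eq.symm ?_)
  have hsq : Real.sqrt (1+t) ^ 2 = 1 + t := Real.sq_sqrt h0.le
  unfold wfun
  field_simp
  linear_combination (16 * Real.sqrt (1+t)^2 - 4 * Real.log (1+t) * (Real.sqrt (1+t)^2 + (1+t))) * hsq

lemma wfun_pos {t : ℝ} (ht : 0 < t) : 0 < wfun t :=
  mul_pos (Real.sqrt_pos.mpr (by linarith)) (Real.log_pos (by linarith))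

lemma wfun_zero : wfun 0 = 0 := by simp [wfun]

theorem stmt_16 (K g : ℝ → ℝ) (hg : ContDiff ℝ 2 g)
    (hg0 : g 0 = 0) (hg0' : deriv g 0 = 1)
    (hK : ∀ t > (0 : ℝ), K t ≤ 1 / (4 * (1 + t) ^ 2))
    (hode : ∀ t > (0 : ℝ), deriv (deriv g) t + K t * g t ≥ 0) :
    ∀ t > (0 : ℝ), 0 < g t := by
  have hg2 : ContDiff ℝ (1+1) g := by exact_mod_cast hg
  have hgd : Differentiable ℝ g := hg.differentiable (by norm_num)
  have hg1 : ContDiff ℝ 1 (deriv g) := (contDiff_succ_iff_deriv.mp hg2).2.2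
  have hgd' : Differentiable ℝ (deriv g) := hg1.differentiable one_ne_zero
  -- positivity near 0
  have hder : HasDerivAt g 1 0 := by
    have := (hgd 0).hasDerivAt; rwa [hg0'] at this
  have hslope : Filter.Tendsto (slope g 0) (nhdsWithin 0 {(0:ℝ)}ᶜ) (nhds 1) :=
    hasDerivAt_iff_tendsto_slope.mp hder
  have hev : ∀ᶠ t in nhdsWithin 0 (Ioi (0:ℝ)), 0 < g t := by
    have h2 : ∀ᶠ t in nhdsWithin 0 {(0:ℝ)}ᶜ, 1/2 < slope g 0 t :=
      hslope.eventually (eventually_gt_nhds (by norm_num))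
    have h3 : ∀ᶠ t in nhdsWithin 0 (Ioi (0:ℝ)), 1/2 < slope g 0 t :=
      h2.filter_mono (nhdsWithin_mono 0 (fun x hx => ne_of_gt hx))
    filter_upwards [h3, self_mem_nhdsWithin] with t h3t ht
    have htpos : (0:ℝ) < t := ht
    have hsl : slope g 0 t = g t / t := by
      simp [slope_def_field, hg0]
    rw [hsl, lt_div_iff₀ htpos] at h3t
    nlinarith
  rw [eventually_nhdsWithin_iff] at hev
  obtain ⟨δ, hδpos, hδ⟩ := Metric.eventually_nhds_iff.mp hev
  have hδ' : ∀ t : ℝ, 0 < t → t < δ → 0 < g t := by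
    intro t ht1 ht2
    exact hδ (by rw [Real.dist_eq]; rw [abs_of_pos] <;> simpa) ht1
  intro t₀ ht₀
  by_contra hcon
  push_neg at hcon
  set S : Set ℝ := {t | 0 < t ∧ g t ≤ 0} with hS
  have hSne : S.Nonempty := ⟨t₀, ht₀, hcon⟩
  have hSbd : BddBelow S := ⟨0, fun x hx => hx.1.le⟩
  set t₁ := sInf S with ht₁
  have ht₁δ : δ ≤ t₁ := by
    apply le_csInf hSne
    intro x hx
    by_contra hlt
    push_neg at hlt
    exact absurd (hδ' x hx.1 hlt) (not_lt.mpr hx.2)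
  have ht₁pos : 0 < t₁ := lt_of_lt_of_le hδpos ht₁δ
  have hgt₁ : g t₁ ≤ 0 := by
    have hcl : t₁ ∈ closure S := csInf_mem_closure hSne hSbd
    have hsub : closure S ⊆ {t | g t ≤ 0} :=
      closure_minimal (fun x hx => hx.2) (isClosed_le hgd.continuous continuous_const)
    exact hsub hcl
  have hpos : ∀ t : ℝ, 0 < t → t < t₁ → 0 < g t := by
    intro t ht htl
    by_contra h
    push_neg at h
    exact absurd (csInf_le hSbd ⟨ht, h⟩) (not_le.mpr htl)
  -- Wronskian
  set W : ℝ → ℝ := fun t => deriv g t * wfun t - g t * wfun' t with hW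
  have hWder : ∀ t ∈ Ioo (0:ℝ) t₁,
      HasDerivAt W (deriv (deriv g) t * wfun t - g t * (-(wfun t)/(4*(1+t)^2))) t := by
    intro t ht
    have hm1 : (-1:ℝ) < t := by linarith [ht.1]
    have h1 : HasDerivAt (deriv g) (deriv (deriv g) t) t := (hgd' t).hasDerivAt
    have h2 : HasDerivAt g (deriv g t) t := (hgd t).hasDerivAt
    have := (h1.mul (hasDerivAt_wfun hm1)).sub (h2.mul (hasDerivAt_wfun' hm1))
    refine this.congr_deriv ?_
    ring
  have hWnonneg : ∀ t ∈ Ioo (0:ℝ) t₁,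
      0 ≤ deriv (deriv g) t * wfun t - g t * (-(wfun t)/(4*(1+t)^2)) := by
    intro t ht
    have h1 := hode t ht.1
    have h2 := hK t ht.1
    have hwp : 0 < wfun t := wfun_pos ht.1
    have hgp : 0 < g t := hpos t ht.1 ht.2
    have h3 : (-(K t * g t)) * wfun t ≤ deriv (deriv g) t * wfun t :=
      mul_le_mul_of_nonneg_right (by linarith) hwp.le
    have h4 : K t * (g t * wfun t) ≤ (1 / (4 * (1 + t) ^ 2)) * (g t * wfun t) :=
      mul_le_mul_of_nonneg_right h2 (mul_pos hgp hwp).le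
    have ht4 : (0:ℝ) < 4 * (1+t)^2 := by nlinarith [ht.1]
    have heq : g t * (-(wfun t)/(4*(1+t)^2)) = -((1 / (4 * (1 + t) ^ 2)) * (g t * wfun t)) := by
      field_simp [ht4.ne']
    rw [heq]
    nlinarith [h3, h4]
  have hwc : ∀ t : ℝ, 0 ≤ t → ContinuousAt wfun t :=
    fun t ht => (hasDerivAt_wfun (by linarith)).continuousAt
  have hwc' : ∀ t : ℝ, 0 ≤ t → ContinuousAt wfun' t :=
    fun t ht => (hasDerivAt_wfun' (by linarith)).continuousAt
  have hWc : ContinuousOn W (Icc 0 t₁) := by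
    intro t ht
    exact (((hgd'.continuous.continuousAt).mul (hwc t ht.1)).sub
      ((hgd.continuous.continuousAt).mul (hwc' t ht.1))).continuousWithinAt
  have hWmono : MonotoneOn W (Icc 0 t₁) := by
    apply monotoneOn_of_deriv_nonneg (convex_Icc _ _) hWc
    · intro t ht
      rw [interior_Icc] at ht
      exact (hWder t ht).differentiableAt.differentiableWithinAt
    · intro t ht
      rw [interior_Icc] at ht
      rw [(hWder t ht).deriv]
      exact hWnonneg t ht
  have hW0 : W 0 = 0 := by
    simp [hW, hg0, wfun_zero]
  have hWge : ∀ t ∈ Icc (0:ℝ) t₁, 0 ≤ W t := by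
    intro t ht
    have := hWmono (left_mem_Icc.mpr ht₁pos.le) ht ht.1
    rwa [hW0] at this
  -- ratio g/w monotone on [s, t₁]
  set s := δ/2 with hs
  have hspos : 0 < s := by positivity
  have hst₁ : s < t₁ := by
    have : s < δ := by simp [hs]; linarith
    linarith
  have hgs : 0 < g s := hδ' s hspos (by simp [hs]; linarith)
  set h : ℝ → ℝ := fun t => g t / wfun t with hh
  have hhder : ∀ t ∈ Ioo s t₁, HasDerivAt h (W t / (wfun t)^2) t := by
    intro t ht
    have htp : 0 < t := lt_trans hspos ht.1
    have hwp : 0 < wfun t := wfun_pos htp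
    have h2 : HasDerivAt g (deriv g t) t := (hgd t).hasDerivAt
    have := h2.div (hasDerivAt_wfun (by linarith : (-1:ℝ) < t)) hwp.ne'
    exact this
  have hhc : ContinuousOn h (Icc s t₁) := by
    intro t ht
    have htp : 0 < t := lt_of_lt_of_le hspos ht.1
    exact ((hgd.continuous.continuousAt).div (hwc t htp.le) (wfun_pos htp).ne').continuousWithinAt
  have hhmono : MonotoneOn h (Icc s t₁) := by
    apply monotoneOn_of_deriv_nonneg (convex_Icc _ _) hhc
    · intro t ht
      rw [interior_Icc] at ht
      exact (hhder t ht).differentiableAt.differentiableWithinAt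
    · intro t ht
      rw [interior_Icc] at ht
      rw [(hhder t ht).deriv]
      have htp : 0 < t := lt_trans hspos ht.1
      have hwp : 0 < wfun t := wfun_pos htp
      exact div_nonneg (hWge t ⟨htp.le, ht.2.le⟩) (by positivity)
  have hfin : h s ≤ h t₁ :=
    hhmono (left_mem_Icc.mpr hst₁.le) (right_mem_Icc.mpr hst₁.le) hst₁.le
  have hhs : 0 < h s := div_pos hgs (wfun_pos hspos)
  have : 0 < g t₁ := by
    have hwp : 0 < wfun t₁ := wfun_pos ht₁pos
    have : 0 < h t₁ := lt_of_lt_of_le hhs hfin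
    have := (div_pos_iff.mp this)
    rcases this with ⟨h1, _⟩ | ⟨_, h2⟩
    · exact h1
    · linarith
  linarith
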